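/- Let G be a finite simple graph and let S ⊊ V(G) be an anchor of G that is maximal, i.e., no set S′ with S ⊊ S′ ⊊ V(G) is an anchor of G. Then the shadow graph established on S is balanced; precisely: for every nonempty proper subset A ⊊ V(G)∖S there exist a subset B ⊆ V(G)∖S with B ≠ A, an automorphism α of the induced subgraph G[S], and a bijection g : A → B such that (i) for every a ∈ A, α maps N_G(a) ∩ S onto N_G(g(a)) ∩ S, and (ii) for all a, a′ ∈ A, a and a′ are adjacent in G if and only if g(a) and g(a′) are adjacent in G. -/

import Mathlib

/-- An *anchor* of `G` is a proper subset `S ⊊ V(G)` such that the induced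
subgraph `G[S]` occurs exactly once in `G`: every `T` with `G[T] ≅ G[S]`
satisfies `T = S`. -/
def IsAnchor {V : Type} (G : SimpleGraph V) (S : Set V) : Prop :=
  S ≠ Set.univ ∧ ∀ T : Set V, Nonempty (G.induce T ≃g G.induce S) → T = S

/-- If `S` is a maximal anchor of `G`, then the shadow graph
established on `S` is balanced: every nonempty proper subset `A ⊊ V(G)∖S` has
an "isomorphic copy" `B ≠ A` inside `V(G)∖S`, i.e. there are an automorphism
`α` of `G[S]` and a bijection `g : A → B` such that `α` maps `N_G(a) ∩ S` onto
`N_G(g a) ∩ S` for each `a ∈ A`, and `g` preserves adjacency within `A`. -/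
theorem stmt_2 {V : Type} [Fintype V] (G : SimpleGraph V) (S : Set V)
    (hanch : IsAnchor G S)
    (hmax : ∀ S' : Set V, S ⊂ S' → S' ≠ Set.univ → ¬ IsAnchor G S') :
    ∀ A : Set V, A ⊆ Sᶜ → A.Nonempty → A ≠ Sᶜ →
      ∃ B : Set V, B ⊆ Sᶜ ∧ B ≠ A ∧
        ∃ (α : G.induce S ≃g G.induce S) (g : ↥A ≃ ↥B),
          (∀ (a : ↥A) (x : ↥S),
            G.Adj (a : V) (x : V) ↔ G.Adj ((g a : V)) ((α x : V))) ∧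
          (∀ a a' : ↥A,
            G.Adj (a : V) (a' : V) ↔ G.Adj ((g a : V)) ((g a' : V))) := by
  intro A hA hAne hAneq
  set S' : Set V := S ∪ A with hS'def
  have hSsub : S ⊂ S' := by
    refine ⟨Set.subset_union_left, fun h => ?_⟩
    obtain ⟨a, ha⟩ := hAne
    exact hA ha (h (Or.inr ha))
  have hS'ne : S' ≠ Set.univ := by
    intro h
    apply hAneq
    refine Set.Subset.antisymm hA (fun v hv => ?_)
    have : v ∈ S' := h ▸ Set.mem_univ v
    exact this.resolve_left hv
  have hnot := hmax S' hSsub hS'ne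
  rw [IsAnchor] at hnot
  push_neg at hnot
  obtain ⟨T, hTiso, hTne⟩ := hnot hS'ne
  obtain ⟨e⟩ := hTiso
  let φ : G.induce S' ≃g G.induce T := e.symm
  let j : ↥S → ↥S' := fun x => ⟨x.1, Or.inl x.2⟩
  let k : ↥A → ↥S' := fun a => ⟨a.1, Or.inr a.2⟩
  set Sφ : Set V := Set.range (fun x : ↥S => (φ (j x) : V)) with hSφdef
  set B : Set V := Set.range (fun a : ↥A => (φ (k a) : V)) with hBdef
  -- the equivalence S ≃ Sφ
  have hinjS : Function.Injective (fun x : ↥S => (⟨(φ (j x) : V), ⟨x, rfl⟩⟩ : ↥Sφ)) := by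
    intro x y h
    simp only [Subtype.mk.injEq] at h
    have h2 : j x = j y := φ.toEquiv.injective (Subtype.ext (Subtype.mk.inj h))
    exact Subtype.ext ((congrArg (fun z : ↥S' => (z : V)) h2 : _))
  have hsurjS : Function.Surjective (fun x : ↥S => (⟨(φ (j x) : V), ⟨x, rfl⟩⟩ : ↥Sφ)) := by
    rintro ⟨v, x, rfl⟩
    exact ⟨x, rfl⟩
  let ε : ↥S ≃ ↥Sφ := Equiv.ofBijective _ ⟨hinjS, hsurjS⟩
  have hεadj : ∀ a b : ↥S,
      (G.induce Sφ).Adj (ε a) (ε b) ↔ (G.induce S).Adj a b := by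
    intro a b
    show G.Adj (φ (j a) : V) (φ (j b) : V) ↔ G.Adj (a : V) (b : V)
    exact φ.map_adj_iff
  have hSφ : Sφ = S := by
    refine hanch.2 Sφ ⟨?_⟩
    exact (RelIso.mk ε (fun {a b} => hεadj a b) : G.induce S ≃g G.induce Sφ).symm
  -- the automorphism α
  have hmemα : ∀ x : ↥S, (φ (j x) : V) ∈ S := fun x => hSφ ▸ ⟨x, rfl⟩
  have hinjα : Function.Injective (fun x : ↥S => (⟨(φ (j x) : V), hmemα x⟩ : ↥S)) := by
    intro x y h
    simp only [Subtype.mk.injEq] at h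
    have h2 : j x = j y := φ.toEquiv.injective (Subtype.ext h)
    exact Subtype.ext ((congrArg (fun z : ↥S' => (z : V)) h2 : _))
  have : Finite ↥S := Subtype.finite
  let αe : ↥S ≃ ↥S := Equiv.ofBijective _ (Finite.injective_iff_bijective.mp hinjα)
  have hαadj : ∀ a b : ↥S,
      (G.induce S).Adj (αe a) (αe b) ↔ (G.induce S).Adj a b := by
    intro a b
    show G.Adj (φ (j a) : V) (φ (j b) : V) ↔ G.Adj (a : V) (b : V)
    exact φ.map_adj_iff
  let α : G.induce S ≃g G.induce S := RelIso.mk αe (fun {a b} => hαadj a b)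
  -- the bijection g : A ≃ B
  have hinjg : Function.Injective (fun a : ↥A => (⟨(φ (k a) : V), ⟨a, rfl⟩⟩ : ↥B)) := by
    intro x y h
    simp only [Subtype.mk.injEq] at h
    have h2 : k x = k y := φ.toEquiv.injective (Subtype.ext (Subtype.mk.inj h))
    exact Subtype.ext ((congrArg (fun z : ↥S' => (z : V)) h2 : _))
  have hsurjg : Function.Surjective (fun a : ↥A => (⟨(φ (k a) : V), ⟨a, rfl⟩⟩ : ↥B)) := by
    rintro ⟨v, a, rfl⟩
    exact ⟨a, rfl⟩
  let g : ↥A ≃ ↥B := Equiv.ofBijective _ ⟨hinjg, hsurjg⟩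
  -- B ⊆ Sᶜ
  have hBsub : B ⊆ Sᶜ := by
    rintro v ⟨a, rfl⟩ hv
    have hv' : (φ (k a) : V) ∈ Sφ := hSφ ▸ hv
    obtain ⟨x, hx⟩ := hv'
    have h2 : j x = k a := φ.toEquiv.injective (Subtype.ext hx)
    have : (x : V) = (a : V) := congrArg Subtype.val h2
    exact hA a.2 (this ▸ x.2)
  -- T = Sφ ∪ B
  have hT : T = Sφ ∪ B := by
    ext v
    constructor
    · intro hv
      obtain ⟨w, hw⟩ := φ.toEquiv.surjective ⟨v, hv⟩
      rcases w.2 with hwS | hwA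
      · left
        exact ⟨⟨w.1, hwS⟩, congrArg Subtype.val hw⟩
      · right
        exact ⟨⟨w.1, hwA⟩, congrArg Subtype.val hw⟩
    · rintro (⟨x, rfl⟩ | ⟨a, rfl⟩)
      · exact (φ (j x)).2
      · exact (φ (k a)).2
  -- B ≠ A
  have hBne : B ≠ A := by
    intro h
    apply hTne
    rw [hT, hSφ, h]
  have hgval : ∀ a : ↥A, (g a : V) = (φ (k a) : V) := fun a => rfl
  have hαval : ∀ x : ↥S, (α x : V) = (φ (j x) : V) := fun x => rfl
  refine ⟨B, hBsub, hBne, α, g, ?_, ?_⟩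
  · intro a x
    rw [hgval, hαval]
    exact (φ.map_adj_iff (v := k a) (w := j x)).symm
  · intro a a'
    rw [hgval, hgval]
    exact (φ.map_adj_iff (v := k a) (w := k a')).symm
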